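/- Key eigenvalue-sum lemma: if a symmetric bilinear form Q on a finite-dimensional inner product space has λ_1+λ_2+λ_3+λ_4+αλ_5 ≥ 0 (with 0 ≤ α ≤ 1 and λ_1 ≤ … ≤ λ_N its eigenvalues), then for any five mutually orthogonal unit vectors v_1,…,v_5 one has Q(v_1,v_1)+Q(v_2,v_2)+Q(v_3,v_3)+Q(v_4,v_4)+αQ(v_5,v_5) ≥ 0. -/

import Mathlib

open scoped BigOperators

/-- The symmetric product `u ⊙ v = u ⊗ v + v ⊗ u`, as a matrix in standard coordinates. -/
def sym2 {n : ℕ} (u v : Fin n → ℝ) : Matrix (Fin n) (Fin n) ℝ :=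
  Matrix.of fun i j => u i * v j + v i * u j

/-- The inner product `⟨A, B⟩ = tr(Aᵀ B)` on two-tensors. -/
def minner {n : ℕ} (A B : Matrix (Fin n) (Fin n) ℝ) : ℝ :=
  ∑ i, ∑ j, A i j * B i j

/-- The curvature operator of the second kind as a bilinear form on symmetric two-tensors:
`R̊(h₁,h₂) = Σ R_{iklj} (h₁)_{ij} (h₂)_{kl}`. -/
def Rsec {n : ℕ} (R : Fin n → Fin n → Fin n → Fin n → ℝ)
    (h₁ h₂ : Matrix (Fin n) (Fin n) ℝ) : ℝ :=
  ∑ i, ∑ j, ∑ k, ∑ l, R i k l j * h₁ i j * h₂ k l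

/-- Multilinear evaluation of the curvature tensor on vectors. -/
def Rap {n : ℕ} (R : Fin n → Fin n → Fin n → Fin n → ℝ) (u v w x : Fin n → ℝ) : ℝ :=
  ∑ i, ∑ j, ∑ k, ∑ l, R i j k l * u i * v j * w k * x l

/-- An algebraic curvature tensor: antisymmetric in each pair, symmetric in pairs,
first Bianchi identity. -/
def IsAlgCurv {n : ℕ} (R : Fin n → Fin n → Fin n → Fin n → ℝ) : Prop :=
  (∀ i j k l, R i j k l = - R j i k l) ∧ (∀ i j k l, R i j k l = - R i j l k) ∧
  (∀ i j k l, R i j k l = R k l i j) ∧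
  (∀ i j k l, R i j k l + R i k l j + R i l j k = 0)

/-- An orthonormal family of vectors in Euclidean space. -/
def OrthonormalFam {n m : ℕ} (v : Fin m → Fin n → ℝ) : Prop :=
  ∀ a b, (∑ k, v a k * v b k) = if a = b then (1 : ℝ) else 0

/-- min-max principle for partial eigenvalue sums with a fractional weight.
If a symmetric bilinear form `Q(v,w) = vᵀAw` on an `N`-dimensional real inner product space
(`N ≥ 5`) has eigenvalues `λ₁ ≤ … ≤ λ_N` with `λ₁+λ₂+λ₃+λ₄+αλ₅ ≥ 0` (`0 ≤ α ≤ 1`), then for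
any five mutually orthogonal unit vectors `v₁,…,v₅`,
`Q(v₁,v₁)+Q(v₂,v₂)+Q(v₃,v₃)+Q(v₄,v₄)+αQ(v₅,v₅) ≥ 0`. -/

lemma sum_five_support {N : ℕ} (hN : 4 < N) (f : Fin N → ℝ)
    (hf : ∀ b : Fin N, 5 ≤ b.val → f b = 0) :
    ∑ b, f b = f ⟨0, by omega⟩ + f ⟨1, by omega⟩ + f ⟨2, by omega⟩ + f ⟨3, by omega⟩
      + f ⟨4, by omega⟩ := by
  classical
  have h : ∑ b, f b = ∑ b ∈ Finset.univ.filter (fun b : Fin N => b.val < 5), f b := by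
    rw [Finset.sum_filter_of_ne]
    intro b _ hb
    by_contra h
    exact hb (hf b (by omega))
  rw [h]
  have : Finset.univ.filter (fun b : Fin N => b.val < 5) =
      {(⟨0, by omega⟩ : Fin N), ⟨1, by omega⟩, ⟨2, by omega⟩, ⟨3, by omega⟩, ⟨4, by omega⟩} := by
    ext b
    simp only [Finset.mem_filter, Finset.mem_univ, true_and, Finset.mem_insert,
      Finset.mem_singleton, Fin.ext_iff]
    omega
  rw [this]
  simp [Finset.sum_insert, Fin.ext_iff]
  ring

lemma minmax_aux {N : ℕ} (hN : 4 < N) (μ : Fin N → ℝ) (hmono : Monotone μ)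
    (α : ℝ) (hα0 : 0 ≤ α) (hα1 : α ≤ 1) (t : Fin N → ℝ)
    (ht0 : ∀ b, 0 ≤ t b) (ht1 : ∀ b, t b ≤ 1) (hts : ∑ b, t b = 4 + α) :
    μ ⟨0, by omega⟩ + μ ⟨1, by omega⟩ + μ ⟨2, by omega⟩ + μ ⟨3, by omega⟩
      + α * μ ⟨4, by omega⟩ ≤ ∑ b, μ b * t b := by
  classical
  set m4 := μ ⟨4, by omega⟩ with hm4
  set s : Fin N → ℝ := fun b => if b.val < 4 then 1 else if b.val = 4 then α else 0 with hs
  have hs5 : ∀ b : Fin N, 5 ≤ b.val → s b = 0 := by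
    intro b hb; simp only [hs]; rw [if_neg (by omega), if_neg (by omega)]
  have hss : ∑ b, s b = 4 + α := by
    rw [sum_five_support hN s hs5]; simp [hs]; ring
  have hμs : ∑ b, μ b * s b = μ ⟨0, by omega⟩ + μ ⟨1, by omega⟩ + μ ⟨2, by omega⟩
      + μ ⟨3, by omega⟩ + α * m4 := by
    rw [sum_five_support hN (fun b => μ b * s b) (fun b hb => by simp [hs5 b hb])]
    simp [hs]; ring
  have hterm : ∀ b : Fin N, 0 ≤ (μ b - m4) * (t b - s b) := by
    intro b
    rcases lt_trichotomy b.val 4 with h | h | h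
    · have h1 : s b = 1 := by simp [hs, h]
      have h2 : μ b ≤ m4 := hmono (by simp [Fin.le_def]; omega)
      rw [h1]
      exact mul_nonneg_of_nonpos_of_nonpos (by linarith) (by linarith [ht1 b])
    · have : b = ⟨4, by omega⟩ := by ext; exact h
      rw [this]; simp [hm4]
    · have h1 : s b = 0 := by simp only [hs]; rw [if_neg (by omega), if_neg (by omega)]
      have h2 : m4 ≤ μ b := hmono (by simp [Fin.le_def]; omega)
      rw [h1, sub_zero]
      exact mul_nonneg (by linarith) (ht0 b)
  have hpos : 0 ≤ ∑ b, (μ b - m4) * (t b - s b) := Finset.sum_nonneg fun b _ => hterm b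
  have hexpand : ∑ b, (μ b - m4) * (t b - s b)
      = ∑ b, μ b * t b - ∑ b, μ b * s b - m4 * (∑ b, t b) + m4 * (∑ b, s b) := by
    rw [Finset.mul_sum, Finset.mul_sum]
    rw [← Finset.sum_sub_distrib, ← Finset.sum_sub_distrib, ← Finset.sum_add_distrib]
    exact Finset.sum_congr rfl fun b _ => by ring
  rw [hexpand, hts, hss] at hpos
  linarith [hpos, hμs.symm.le]



section main
variable {N : ℕ} (A : Matrix (Fin N) (Fin N) ℝ)
  (u : Fin N → Fin N → ℝ) (v : Fin 5 → Fin N → ℝ) (μ : Fin N → ℝ)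

lemma u_complete (hu : OrthonormalFam u) :
    ∀ i j : Fin N, (∑ b, u b i * u b j) = if i = j then (1 : ℝ) else 0 := by
  intro i j
  let U : Matrix (Fin N) (Fin N) ℝ := Matrix.of u
  have h1 : U * U.transpose = 1 := by
    ext a b
    simpa [U, Matrix.mul_apply, Matrix.one_apply] using hu a b
  have h2 : U.transpose * U = 1 := mul_eq_one_comm.mp h1
  have := congrFun (congrFun h2 i) j
  simpa [U, Matrix.mul_apply, Matrix.one_apply, mul_comm] using this

lemma v_expand (hu : OrthonormalFam u) (a : Fin 5) (j : Fin N) :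
    v a j = ∑ b, (∑ k, v a k * u b k) * u b j := by
  calc v a j = ∑ k, v a k * (if k = j then (1:ℝ) else 0) := by simp
    _ = ∑ k, v a k * (∑ b, u b k * u b j) := by
        refine Finset.sum_congr rfl fun k _ => by rw [u_complete u hu k j]
    _ = ∑ k, ∑ b, v a k * (u b k * u b j) := by
        refine Finset.sum_congr rfl fun k _ => Finset.mul_sum _ _ _
    _ = ∑ b, ∑ k, v a k * (u b k * u b j) := Finset.sum_comm
    _ = ∑ b, (∑ k, v a k * u b k) * u b j := by
        refine Finset.sum_congr rfl fun b _ => ?_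
        rw [Finset.sum_mul]
        exact Finset.sum_congr rfl fun k _ => by ring

lemma Q_diag (hu : OrthonormalFam u) (heig : ∀ a, A.mulVec (u a) = μ a • u a) (a : Fin 5) :
    (∑ i, ∑ j, v a i * A i j * v a j) = ∑ b, μ b * (∑ k, v a k * u b k)^2 := by
  have heig' : ∀ b i, (∑ j, A i j * u b j) = μ b * u b i := by
    intro b i
    have := congrFun (heig b) i
    simpa [Matrix.mulVec, dotProduct] using this
  calc (∑ i, ∑ j, v a i * A i j * v a j)
      = ∑ i, v a i * ∑ j, A i j * v a j := by
        refine Finset.sum_congr rfl fun i _ => ?_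
        rw [Finset.mul_sum]
        exact Finset.sum_congr rfl fun j _ => by ring
    _ = ∑ i, v a i * ∑ b, (∑ k, v a k * u b k) * (μ b * u b i) := by
        refine Finset.sum_congr rfl fun i _ => ?_
        congr 1
        calc ∑ j, A i j * v a j
            = ∑ j, A i j * ∑ b, (∑ k, v a k * u b k) * u b j := by
              refine Finset.sum_congr rfl fun j _ => by rw [← v_expand u v hu a j]
          _ = ∑ j, ∑ b, (∑ k, v a k * u b k) * (A i j * u b j) := by
              refine Finset.sum_congr rfl fun j _ => ?_
              rw [Finset.mul_sum]
              exact Finset.sum_congr rfl fun b _ => by ring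
          _ = ∑ b, ∑ j, (∑ k, v a k * u b k) * (A i j * u b j) := Finset.sum_comm
          _ = ∑ b, (∑ k, v a k * u b k) * ∑ j, (A i j * u b j) := by
              refine Finset.sum_congr rfl fun b _ => (Finset.mul_sum _ _ _).symm
          _ = ∑ b, (∑ k, v a k * u b k) * (μ b * u b i) := by
              refine Finset.sum_congr rfl fun b _ => by rw [heig' b i]
    _ = ∑ i, ∑ b, ((∑ k, v a k * u b k) * μ b) * (v a i * u b i) := by
        refine Finset.sum_congr rfl fun i _ => ?_
        rw [Finset.mul_sum]
        exact Finset.sum_congr rfl fun b _ => by ring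
    _ = ∑ b, ∑ i, ((∑ k, v a k * u b k) * μ b) * (v a i * u b i) := Finset.sum_comm
    _ = ∑ b, ((∑ k, v a k * u b k) * μ b) * ∑ i, (v a i * u b i) := by
        refine Finset.sum_congr rfl fun b _ => (Finset.mul_sum _ _ _).symm
    _ = ∑ b, μ b * (∑ k, v a k * u b k)^2 := by
        refine Finset.sum_congr rfl fun b _ => by ring

lemma c_norm (hu : OrthonormalFam u) (hv : OrthonormalFam v) (a : Fin 5) :
    ∑ b, (∑ k, v a k * u b k)^2 = 1 := by
  calc ∑ b, (∑ k, v a k * u b k)^2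
      = ∑ b, (∑ k, v a k * u b k) * ∑ k, v a k * u b k := by
        refine Finset.sum_congr rfl fun b _ => sq _
    _ = ∑ b, ∑ k, v a k * ((∑ k', v a k' * u b k') * u b k) := by
        refine Finset.sum_congr rfl fun b _ => ?_
        rw [Finset.mul_sum]
        exact Finset.sum_congr rfl fun k _ => by ring
    _ = ∑ k, ∑ b, v a k * ((∑ k', v a k' * u b k') * u b k) := Finset.sum_comm
    _ = ∑ k, v a k * ∑ b, (∑ k', v a k' * u b k') * u b k := by
        refine Finset.sum_congr rfl fun k _ => (Finset.mul_sum _ _ _).symm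
    _ = ∑ k, v a k * v a k := by
        refine Finset.sum_congr rfl fun k _ => by rw [← v_expand u v hu a k]
    _ = 1 := by simpa using hv a a

lemma bessel (hu : OrthonormalFam u) (hv : OrthonormalFam v) (b : Fin N) :
    ∑ a : Fin 5, (∑ k, v a k * u b k)^2 ≤ 1 := by
  set c : Fin 5 → ℝ := fun a => ∑ k, v a k * u b k with hc
  have key : 0 ≤ ∑ k, (u b k - ∑ a, c a * v a k) * (u b k - ∑ a, c a * v a k) :=
    Finset.sum_nonneg fun k _ => mul_self_nonneg _
  have expand : ∑ k, (u b k - ∑ a, c a * v a k) * (u b k - ∑ a, c a * v a k)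
      = 1 - ∑ a, (c a)^2 := by
    have e1 : ∑ k, u b k * u b k = 1 := by simpa using hu b b
    have e3 : ∑ k, (∑ a, c a * v a k) * (∑ a, c a * v a k) = ∑ a, (c a)^2 := by
      calc ∑ k, (∑ a, c a * v a k) * (∑ a, c a * v a k)
          = ∑ k, ∑ a, ∑ a', (c a * c a') * (v a k * v a' k) := by
            refine Finset.sum_congr rfl fun k _ => ?_
            rw [Finset.sum_mul_sum]
            exact Finset.sum_congr rfl fun a _ => Finset.sum_congr rfl fun a' _ => by ring
        _ = ∑ a, ∑ a', (c a * c a') * ∑ k, (v a k * v a' k) := by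
            rw [Finset.sum_comm]
            refine Finset.sum_congr rfl fun a _ => ?_
            rw [Finset.sum_comm]
            exact Finset.sum_congr rfl fun a' _ => (Finset.mul_sum _ _ _).symm
        _ = ∑ a, ∑ a', (c a * c a') * (if a = a' then (1:ℝ) else 0) := by
            refine Finset.sum_congr rfl fun a _ => Finset.sum_congr rfl fun a' _ => by
              rw [hv a a']
        _ = ∑ a, (c a)^2 := by
            refine Finset.sum_congr rfl fun a _ => ?_
            simp [mul_ite, Finset.sum_ite_eq, sq]
    have e4 : ∑ k, u b k * (∑ a, c a * v a k) = ∑ a, (c a)^2 := by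
      calc ∑ k, u b k * (∑ a, c a * v a k) = ∑ k, ∑ a, c a * (v a k * u b k) := by
            refine Finset.sum_congr rfl fun k _ => ?_
            rw [Finset.mul_sum]
            exact Finset.sum_congr rfl fun a _ => by ring
        _ = ∑ a, ∑ k, c a * (v a k * u b k) := Finset.sum_comm
        _ = ∑ a, c a * ∑ k, (v a k * u b k) := by
            refine Finset.sum_congr rfl fun a _ => (Finset.mul_sum _ _ _).symm
        _ = ∑ a, (c a)^2 := by
            refine Finset.sum_congr rfl fun a _ => by rw [hc]; ring
    calc ∑ k, (u b k - ∑ a, c a * v a k) * (u b k - ∑ a, c a * v a k)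
        = ∑ k, (u b k * u b k - 2 * (u b k * (∑ a, c a * v a k))
            + (∑ a, c a * v a k) * (∑ a, c a * v a k)) :=
          Finset.sum_congr rfl fun k _ => by ring
      _ = (∑ k, u b k * u b k) - 2 * (∑ k, u b k * (∑ a, c a * v a k))
            + ∑ k, (∑ a, c a * v a k) * (∑ a, c a * v a k) := by
          rw [Finset.sum_add_distrib, Finset.sum_sub_distrib, Finset.mul_sum]
      _ = 1 - ∑ a, (c a)^2 := by rw [e1, e3, e4]; ring
  rw [expand] at key
  linarith

end main

theorem statement_7 (N : ℕ) (hN : 5 ≤ N)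
    (A : Matrix (Fin N) (Fin N) ℝ) (hA : A.IsSymm)
    (u : Fin N → Fin N → ℝ) (hu : OrthonormalFam u)
    (μ : Fin N → ℝ) (hmono : Monotone μ)
    (heig : ∀ a, A.mulVec (u a) = μ a • u a)
    (α : ℝ) (hα0 : 0 ≤ α) (hα1 : α ≤ 1)
    (hsum : 0 ≤ μ ⟨0, by omega⟩ + μ ⟨1, by omega⟩ + μ ⟨2, by omega⟩ + μ ⟨3, by omega⟩
      + α * μ ⟨4, by omega⟩) :
    ∀ v : Fin 5 → Fin N → ℝ, OrthonormalFam v →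
      0 ≤ (∑ i, ∑ j, v 0 i * A i j * v 0 j) + (∑ i, ∑ j, v 1 i * A i j * v 1 j)
        + (∑ i, ∑ j, v 2 i * A i j * v 2 j) + (∑ i, ∑ j, v 3 i * A i j * v 3 j)
        + α * (∑ i, ∑ j, v 4 i * A i j * v 4 j) := by
  intro v hv
  set c : Fin 5 → Fin N → ℝ := fun a b => ∑ k, v a k * u b k with hc
  set t : Fin N → ℝ := fun b => (c 0 b)^2 + (c 1 b)^2 + (c 2 b)^2 + (c 3 b)^2
      + α * (c 4 b)^2 with ht
  have ht0 : ∀ b, 0 ≤ t b := fun b => by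
    have := sq_nonneg (c 0 b); have := sq_nonneg (c 1 b); have := sq_nonneg (c 2 b)
    have := sq_nonneg (c 3 b); have h4 := sq_nonneg (c 4 b)
    have := mul_nonneg hα0 h4
    simp only [ht]; linarith
  have ht1 : ∀ b, t b ≤ 1 := by
    intro b
    have hB := bessel u v hu hv b
    rw [Fin.sum_univ_five] at hB
    have h4 := sq_nonneg (c 4 b)
    have : α * (c 4 b)^2 ≤ (c 4 b)^2 := by nlinarith
    simp only [ht]
    simp only [hc]
    linarith [hB, this]
  have hts : ∑ b, t b = 4 + α := by
    have h0 := c_norm u v hu hv 0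
    have h1 := c_norm u v hu hv 1
    have h2 := c_norm u v hu hv 2
    have h3 := c_norm u v hu hv 3
    have h4 := c_norm u v hu hv 4
    simp only [ht, hc]
    rw [Finset.sum_add_distrib, Finset.sum_add_distrib, Finset.sum_add_distrib,
      Finset.sum_add_distrib, ← Finset.mul_sum]
    rw [h0, h1, h2, h3, h4]
    ring
  have hQ : ∀ a : Fin 5, (∑ i, ∑ j, v a i * A i j * v a j) = ∑ b, μ b * (c a b)^2 :=
    fun a => Q_diag A u v μ hu heig a
  have hmt : ∑ b, μ b * t b
      = (∑ i, ∑ j, v 0 i * A i j * v 0 j) + (∑ i, ∑ j, v 1 i * A i j * v 1 j)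
        + (∑ i, ∑ j, v 2 i * A i j * v 2 j) + (∑ i, ∑ j, v 3 i * A i j * v 3 j)
        + α * (∑ i, ∑ j, v 4 i * A i j * v 4 j) := by
    rw [hQ 0, hQ 1, hQ 2, hQ 3, hQ 4]
    simp only [ht]
    rw [Finset.mul_sum, ← Finset.sum_add_distrib, ← Finset.sum_add_distrib,
      ← Finset.sum_add_distrib, ← Finset.sum_add_distrib]
    exact Finset.sum_congr rfl fun b _ => by ring
  have := minmax_aux hN μ hmono α hα0 hα1 t ht0 ht1 hts
  rw [hmt] at this
  linarith [hsum, this]
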